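/- Let X be a real Hilbert space, K a nonempty closed convex subset of X, A : X → X an operator for which there exist constants m > 0 and M > 0 with (Au − Av, u − v)_X ≥ m‖u − v‖_X² and ‖Au − Av‖_X ≤ M‖u − v‖_X for all u, v ∈ X, and j : X × X → ℝ such that for every η ∈ X the map v ↦ j(η, v) is convex and lower semicontinuous, and there exists α ≥ 0 with j(η, ṽ) − j(η, v) + j(η̃, v) − j(η̃, ṽ) ≤ α‖η − η̃‖_X‖v − ṽ‖_X for all η, η̃, v, ṽ ∈ X; assume m > α and f ∈ X. Let K* be a nonempty closed convex subset of X with K* ⊆ K, let G : X → X be a monotone Lipschitz continuous operator, and let λ > 0. Then: (i) there exists a unique u* ∈ K* such that (Au*, v − u*)_X + j(u*, v) − j(u*, u*) ≥ (f, v − u*)_X for all v ∈ K*; and (ii) there exists a unique u_λ ∈ K such that (Au_λ, v − u_λ)_X + (1/λ)(Gu_λ, v − u_λ)_X + j(u_λ, v) − j(u_λ, u_λ) ≥ (f, v − u_λ)_X for all v ∈ K. -/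

import Mathlib

open scoped InnerProductSpace Topology NNReal

set_option maxHeartbeats 1000000

theorem my_affine_minorant {X : Type*} [NormedAddCommGroup X] [InnerProductSpace ℝ X]
    (φ : X → ℝ) (hc : ConvexOn ℝ Set.univ φ) (hl : LowerSemicontinuous φ) :
    ∃ c b : ℝ, 0 ≤ c ∧ ∀ x, b - c * ‖x‖ ≤ φ x := by
  set E : Set (X × ℝ) := {p | φ p.1 ≤ p.2} with hE
  have hEc : Convex ℝ E := by
    have h := hc.convex_epigraph
    convert h using 1
    ext p; simp [hE]
  have hEcl : IsClosed E := by
    rw [← isOpen_compl_iff, isOpen_iff_mem_nhds]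
    rintro ⟨x, r⟩ hp
    simp only [Set.mem_compl_iff, hE, Set.mem_setOf_eq, not_le] at hp
    obtain ⟨y, hy1, hy2⟩ := exists_between hp
    have h1 : {x' : X | y < φ x'} ∈ 𝓝 x := hl x y hy2
    have h2 : Set.Iio y ∈ 𝓝 r := Iio_mem_nhds hy1
    refine Filter.mem_of_superset (prod_mem_nhds h1 h2) ?_
    rintro ⟨x', r'⟩ ⟨hx', hr'⟩
    simp only [Set.mem_compl_iff, hE, Set.mem_setOf_eq, not_le]
    exact lt_trans hr' hx'
  have hx : ((0 : X), φ 0 - 1) ∉ E := by simp [hE]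
  obtain ⟨g, u, hgu, hgE⟩ := geometric_hahn_banach_point_closed hEc hEcl hx
  set a : ℝ := g (0, 1) with ha
  have hdecomp : ∀ (x : X) (t : ℝ), g (x, t) = g (x, 0) + t * a := by
    intro x t
    have hxt : ((x, t) : X × ℝ) = (x, (0:ℝ)) + t • ((0:X), (1:ℝ)) := by
      simp [Prod.ext_iff]
    rw [hxt, map_add, map_smul]; simp [ha]
  have hmem : ∀ (x : X) (t : ℝ), φ x ≤ t → u < g (x, 0) + t * a := by
    intro x t hxt
    have h2 := hgE (x, t) hxt
    rwa [hdecomp] at h2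
  have hg00 : g ((0:X), (0:ℝ)) = 0 := by exact map_zero g
  have ha0 : 0 < a := by
    rcases lt_trichotomy a 0 with h | h | h
    · exfalso
      set t : ℝ := max (φ 0) ((u - 1) / a) with hT
      have h1 := hmem 0 t (le_max_left _ _)
      have h2 : (u - 1) / a ≤ t := le_max_right _ _
      have h3 : t * a ≤ u - 1 := by
        have := mul_le_mul_of_nonpos_right h2 h.le
        rwa [div_mul_cancel₀ _ (ne_of_lt h)] at this
      rw [hg00] at h1
      linarith
    · exfalso
      have h1 := hmem 0 (φ 0) le_rfl
      rw [hg00, h] at h1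
      have h2 : g ((0:X), φ 0 - 1) = 0 := by rw [hdecomp, hg00, h]; ring
      rw [h2] at hgu
      linarith
    · exact h
  refine ⟨‖g‖ / a, u / a, by positivity, fun x => ?_⟩
  have h1 := hmem x (φ x) le_rfl
  have h2 : g (x, 0) ≤ ‖g‖ * ‖x‖ := by
    calc g (x, 0) ≤ ‖g (x, 0)‖ := le_abs_self _
    _ ≤ ‖g‖ * ‖((x, (0:ℝ)) : X × ℝ)‖ := g.le_opNorm _
    _ = ‖g‖ * ‖x‖ := by
        congr 1
        simp [Prod.norm_def]
  rw [div_mul_eq_mul_div, div_sub_div_same, div_le_iff₀ ha0]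
  nlinarith [norm_nonneg x, norm_nonneg g]

theorem my_prox {X : Type*} [NormedAddCommGroup X] [InnerProductSpace ℝ X] [CompleteSpace X]
    (C : Set X) (hCne : C.Nonempty) (hCcl : IsClosed C) (hCcx : Convex ℝ C)
    (φ : X → ℝ) (hφc : ConvexOn ℝ Set.univ φ) (hφl : LowerSemicontinuous φ) (z : X) :
    ∃ u ∈ C, ∀ v ∈ C, ⟪z - u, v - u⟫_ℝ ≤ φ v - φ u := by
  obtain ⟨c, b, hc, hmin⟩ := my_affine_minorant φ hφc hφl
  have hgc : Continuous fun v : X => ‖v‖ ^ 2 / 2 - ⟪z, v⟫_ℝ :=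
    ((continuous_norm.pow 2).div_const 2).sub (continuous_const.inner continuous_id)
  obtain ⟨F, hF⟩ : ∃ F : X → ℝ, F = fun v => (‖v‖ ^ 2 / 2 - ⟪z, v⟫_ℝ) + φ v := ⟨_, rfl⟩
  have hFlsc : LowerSemicontinuous F := by
    intro x y hy
    simp only [hF] at hy
    obtain ⟨g, hg⟩ : ∃ g : X → ℝ, g = fun v => ‖v‖ ^ 2 / 2 - ⟪z, v⟫_ℝ := ⟨_, rfl⟩
    have hδ : 0 < (g x + φ x - y) / 2 := by rw [hg]; simp only; linarith
    have e1 : ∀ᶠ x' in 𝓝 x, g x - (g x + φ x - y) / 2 < g x' := by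
      rw [hg]
      exact (hgc.tendsto x).eventually (eventually_gt_nhds (by linarith))
    have e2 : ∀ᶠ x' in 𝓝 x, φ x - (g x + φ x - y) / 2 < φ x' := hφl x _ (by linarith)
    filter_upwards [e1, e2] with x' h1 h2
    simp only [hF]
    have hgx' : g x' = ‖x'‖ ^ 2 / 2 - ⟪z, x'⟫_ℝ := by rw [hg]
    have hgx : g x = ‖x‖ ^ 2 / 2 - ⟪z, x⟫_ℝ := by rw [hg]
    rw [hgx', hgx] at h1
    linarith [h1, h2]
  have hFlb : ∀ v, b - (‖z‖ + c) ^ 2 / 2 ≤ F v := by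
    intro v
    have h1 := hmin v
    have h2 : ⟪z, v⟫_ℝ ≤ ‖z‖ * ‖v‖ := real_inner_le_norm z v
    simp only [hF]
    nlinarith [norm_nonneg v, sq_nonneg (‖v‖ - (‖z‖ + c))]
  have hne : (F '' C).Nonempty := hCne.image F
  have hbdd : BddBelow (F '' C) := ⟨b - (‖z‖ + c) ^ 2 / 2, by rintro _ ⟨v, _, rfl⟩; exact hFlb v⟩
  obtain ⟨d, hd⟩ : ∃ d : ℝ, d = sInf (F '' C) := ⟨_, rfl⟩
  have hd_le : ∀ v ∈ C, d ≤ F v := fun v hv => hd ▸ csInf_le hbdd ⟨v, hv, rfl⟩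
  -- strong convexity estimate
  have key : ∀ p ∈ C, ∀ q ∈ C, ‖p - q‖ ^ 2 ≤ 4 * (F p - d) + 4 * (F q - d) := by
    intro p hp q hq
    have hmid : (1/2 : ℝ) • (p + q) ∈ C := by
      have := hCcx hp hq (by norm_num : (0:ℝ) ≤ 1/2) (by norm_num : (0:ℝ) ≤ 1/2) (by norm_num)
      simpa [smul_add] using this
    have hFd := hd_le _ hmid
    have hφmid : φ ((1/2 : ℝ) • (p + q)) ≤ (1/2) * φ p + (1/2) * φ q := by
      have := hφc.2 (Set.mem_univ p) (Set.mem_univ q)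
        (by norm_num : (0:ℝ) ≤ 1/2) (by norm_num : (0:ℝ) ≤ 1/2) (by norm_num)
      simpa [smul_add, smul_eq_mul] using this
    have e1 : ‖(1/2 : ℝ) • (p + q)‖ ^ 2 = ‖p + q‖ ^ 2 / 4 := by
      rw [norm_smul]
      simp [mul_pow]
      ring
    have e2 : ⟪z, (1/2 : ℝ) • (p + q)⟫_ℝ = (⟪z, p⟫_ℝ + ⟪z, q⟫_ℝ) / 2 := by
      rw [real_inner_smul_right, inner_add_right]; ring
    have epar : ‖p + q‖ ^ 2 + ‖p - q‖ ^ 2 = 2 * (‖p‖ ^ 2 + ‖q‖ ^ 2) := by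
      have := parallelogram_law_with_norm ℝ p q
      nlinarith [this]
    simp only [hF] at hFd ⊢
    rw [e1, e2] at hFd
    nlinarith [hφmid, hFd]
  -- minimizing sequence
  have hseq : ∀ n : ℕ, ∃ v, v ∈ C ∧ F v < d + 1 / (n + 1) := by
    intro n
    obtain ⟨_, ⟨v, hv, rfl⟩, hlt⟩ := Real.lt_sInf_add_pos hne (by positivity : (0:ℝ) < 1 / (n+1))
    exact ⟨v, hv, by rw [hd]; exact hlt⟩
  choose w hwC hwF using hseq
  have hcauchy : CauchySeq w := by
    rw [Metric.cauchySeq_iff']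
    intro ε hε
    obtain ⟨N, hN⟩ := exists_nat_gt (8 / ε ^ 2)
    refine ⟨N, fun n hn => ?_⟩
    have h8 : (8 : ℝ) / (N + 1) < ε ^ 2 := by
      rw [div_lt_iff₀ (by positivity)]
      have h9 := mul_lt_mul_of_pos_right hN (pow_pos hε 2)
      rw [div_mul_cancel₀ _ (ne_of_gt (pow_pos hε 2))] at h9
      nlinarith [pow_pos hε 2]
    have h1 : ‖w n - w N‖ ^ 2 ≤ 4 * (F (w n) - d) + 4 * (F (w N) - d) :=
      key _ (hwC n) _ (hwC N)
    have h4 : (1 : ℝ) / (n + 1) ≤ 1 / (N + 1) := by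
      apply div_le_div_of_nonneg_left (by norm_num) (by positivity)
      exact_mod_cast by linarith [hn]
    have h5 : ‖w n - w N‖ ^ 2 < ε ^ 2 := by
      calc ‖w n - w N‖ ^ 2 ≤ 4 * (F (w n) - d) + 4 * (F (w N) - d) := h1
      _ < 4 * (1 / (N + 1)) + 4 * (1 / (N + 1)) := by linarith [hwF n, hwF N]
      _ = 8 / (N + 1) := by ring
      _ < ε ^ 2 := h8
    rw [dist_eq_norm]
    by_contra hcon
    push_neg at hcon
    have := pow_le_pow_left₀ hε.le hcon 2
    linarith
  obtain ⟨u, hu⟩ := cauchySeq_tendsto_of_complete hcauchy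
  have huC : u ∈ C := hCcl.mem_of_tendsto hu (Filter.Eventually.of_forall hwC)
  have hFu : F u ≤ d := by
    by_contra hcon
    push_neg at hcon
    obtain ⟨y, hy1, hy2⟩ := exists_between hcon
    have e1 : ∀ᶠ n in Filter.atTop, y < F (w n) := hu.eventually (hFlsc u y hy2)
    have e2 : ∀ᶠ n in Filter.atTop, F (w n) < y := by
      have hev3 : ∀ᶠ n : ℕ in Filter.atTop, (1 : ℝ) / (n + 1) < y - d :=
        tendsto_one_div_add_atTop_nhds_zero_nat.eventually
          (eventually_lt_nhds (by linarith : (0:ℝ) < y - d))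
      exact hev3.mono fun n hn => by linarith [hwF n]
    obtain ⟨n, ha, hb⟩ := (e1.and e2).exists
    linarith
  have hFud : F u = d := le_antisymm hFu (hd_le u huC)
  -- derive the variational inequality
  refine ⟨u, huC, fun v hv => ?_⟩
  rcases eq_or_ne v u with rfl | hvu
  · simp
  by_contra hcon
  push_neg at hcon
  obtain ⟨cc, hcc⟩ : ∃ cc : ℝ, cc = φ v - φ u - ⟪z - u, v - u⟫_ℝ := ⟨_, rfl⟩
  have hccneg : cc < 0 := by rw [hcc]; linarith
  have hnvu : 0 < ‖v - u‖ ^ 2 := by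
    have h0 : 0 < ‖v - u‖ := norm_pos_iff.mpr (sub_ne_zero.mpr hvu)
    positivity
  obtain ⟨t, ht⟩ : ∃ t : ℝ, t = min 1 (-cc / ‖v - u‖ ^ 2) := ⟨_, rfl⟩
  have ht0 : 0 < t := by
    rw [ht]
    exact lt_min one_pos (div_pos (by linarith) hnvu)
  have ht1 : t ≤ 1 := by rw [ht]; exact min_le_left _ _
  have htc : t * ‖v - u‖ ^ 2 ≤ -cc := by
    have h1 : t ≤ -cc / ‖v - u‖ ^ 2 := by rw [ht]; exact min_le_right _ _
    calc t * ‖v - u‖ ^ 2 ≤ (-cc / ‖v - u‖ ^ 2) * ‖v - u‖ ^ 2 :=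
      mul_le_mul_of_nonneg_right h1 (le_of_lt hnvu)
    _ = -cc := div_mul_cancel₀ _ (ne_of_gt hnvu)
  have heq : u + t • (v - u) = (1 - t) • u + t • v := by
    rw [sub_smul, one_smul, smul_sub]; abel
  have hmemt : u + t • (v - u) ∈ C := by
    rw [heq]
    exact hCcx huC hv (by linarith) (le_of_lt ht0) (by ring)
  have hFt := hd_le _ hmemt
  rw [← hFud] at hFt
  have e1 : ‖u + t • (v - u)‖ ^ 2 = ‖u‖ ^ 2 + 2 * t * ⟪u, v - u⟫_ℝ + t ^ 2 * ‖v - u‖ ^ 2 := by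
    rw [norm_add_sq_real, real_inner_smul_right, norm_smul]
    rw [Real.norm_eq_abs, abs_of_pos ht0]
    ring
  have e2 : ⟪z, u + t • (v - u)⟫_ℝ = ⟪z, u⟫_ℝ + t * ⟪z, v - u⟫_ℝ := by
    rw [inner_add_right, real_inner_smul_right]
  have e3 : φ (u + t • (v - u)) ≤ (1 - t) * φ u + t * φ v := by
    rw [heq]
    have := hφc.2 (Set.mem_univ u) (Set.mem_univ v) (by linarith : (0:ℝ) ≤ 1 - t)
      (le_of_lt ht0) (by ring)
    simpa [smul_eq_mul] using this
  have e4 : ⟪z - u, v - u⟫_ℝ = ⟪z, v - u⟫_ℝ - ⟪u, v - u⟫_ℝ := inner_sub_left _ _ _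
  have expand : F (u + t • (v - u)) =
      F u + t * (⟪u, v - u⟫_ℝ - ⟪z, v - u⟫_ℝ) + t ^ 2 * ‖v - u‖ ^ 2 / 2
        + (φ (u + t • (v - u)) - φ u) := by
    simp only [hF]
    rw [e1, e2]
    ring
  have hfinal : 0 ≤ t * cc + t ^ 2 * ‖v - u‖ ^ 2 / 2 := by
    rw [hcc, e4]
    nlinarith [hFt, expand, e3]
  nlinarith [mul_le_mul_of_nonneg_left htc ht0.le, mul_pos ht0 (neg_pos.mpr hccneg)]

theorem my_norm_le_of_sq {a b : ℝ} (hb : 0 ≤ b) (h : a ^ 2 ≤ b ^ 2) (ha : 0 ≤ a) : a ≤ b := by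
  nlinarith

theorem my_vi2 {X : Type*} [NormedAddCommGroup X] [InnerProductSpace ℝ X] [CompleteSpace X]
    (C : Set X) (hCne : C.Nonempty) (hCcl : IsClosed C) (hCcx : Convex ℝ C)
    (B : X → X) (m M : ℝ) (hm : 0 < m) (hM : 0 < M)
    (hBmono : ∀ u v : X, m * ‖u - v‖ ^ 2 ≤ ⟪B u - B v, u - v⟫_ℝ)
    (hBlip : ∀ u v : X, ‖B u - B v‖ ≤ M * ‖u - v‖)
    (φ : X → ℝ) (hφc : ConvexOn ℝ Set.univ φ) (hφl : LowerSemicontinuous φ) (f : X) :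
    ∃! u : X, u ∈ C ∧ ∀ v ∈ C, ⟪f - B u, v - u⟫_ℝ ≤ φ v - φ u := by
  obtain ⟨ρ, hρdef⟩ : ∃ ρ : ℝ, ρ = m / M ^ 2 := ⟨_, rfl⟩
  have hρ : 0 < ρ := by rw [hρdef]; positivity
  obtain ⟨ψ, hψ⟩ : ∃ ψ : X → ℝ, ψ = fun v => ρ * φ v := ⟨_, rfl⟩
  have hψc : ConvexOn ℝ Set.univ ψ := by
    rw [hψ]
    simpa [smul_eq_mul] using hφc.smul hρ.le
  have hψl : LowerSemicontinuous ψ := by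
    rw [hψ]
    intro x y hy
    simp only at hy
    have h1 : y / ρ < φ x := by rw [div_lt_iff₀ hρ]; linarith [hy, mul_comm ρ (φ x)]
    exact (hφl x _ h1).mono fun x' h => by
      simp only
      replace h : y / ρ < φ x' := h; rw [div_lt_iff₀ hρ] at h
      linarith [h, mul_comm ρ (φ x')]
  -- the prox-based fixed point map
  have hTex : ∀ w : X, ∃ u ∈ C, ∀ v ∈ C,
      ⟪(w - ρ • (B w - f)) - u, v - u⟫_ℝ ≤ ψ v - ψ u :=
    fun w => my_prox C hCne hCcl hCcx ψ hψc hψl _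
  choose T hTC hTvi using hTex
  -- nonexpansiveness of the prox w.r.t. the data point
  have hsumid : ∀ z₁ z₂ u₁ u₂ : X,
      ⟪z₁ - u₁, u₂ - u₁⟫_ℝ + ⟪z₂ - u₂, u₁ - u₂⟫_ℝ
        = ‖u₁ - u₂‖ ^ 2 - ⟪z₁ - z₂, u₁ - u₂⟫_ℝ := by
    intro z₁ z₂ u₁ u₂
    have el : ∀ a : X, ⟪a, u₂ - u₁⟫_ℝ = -⟪a, u₁ - u₂⟫_ℝ := fun a => by
      rw [show u₂ - u₁ = -(u₁ - u₂) by abel, inner_neg_right]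
    have hn : ⟪u₁, u₁ - u₂⟫_ℝ - ⟪u₂, u₁ - u₂⟫_ℝ = ‖u₁ - u₂‖ ^ 2 := by
      rw [← inner_sub_left, real_inner_self_eq_norm_sq]
    simp only [inner_sub_left, el]
    linarith [hn]
  have hne : ∀ w₁ w₂ : X, ‖T w₁ - T w₂‖ ≤
      ‖(w₁ - ρ • (B w₁ - f)) - (w₂ - ρ • (B w₂ - f))‖ := by
    intro w₁ w₂
    have h1 := hTvi w₁ (T w₂) (hTC w₂)
    have h2 := hTvi w₂ (T w₁) (hTC w₁)
    have hsum := add_le_add h1 h2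
    rw [hsumid] at hsum
    have hkey : ‖T w₁ - T w₂‖ ^ 2 ≤
        ⟪(w₁ - ρ • (B w₁ - f)) - (w₂ - ρ • (B w₂ - f)), T w₁ - T w₂⟫_ℝ := by
      linarith [hsum]
    have hcs := real_inner_le_norm ((w₁ - ρ • (B w₁ - f)) - (w₂ - ρ • (B w₂ - f))) (T w₁ - T w₂)
    nlinarith [norm_nonneg (T w₁ - T w₂),
      norm_nonneg ((w₁ - ρ • (B w₁ - f)) - (w₂ - ρ • (B w₂ - f)))]
  -- contraction factor
  obtain ⟨κ, hκdef⟩ : ∃ κ : ℝ, κ = Real.sqrt (max (1 - m ^ 2 / M ^ 2) 0) := ⟨_, rfl⟩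
  have hκ0 : 0 ≤ κ := hκdef ▸ Real.sqrt_nonneg _
  have hκsq : κ ^ 2 = max (1 - m ^ 2 / M ^ 2) 0 := by
    rw [hκdef, Real.sq_sqrt (le_max_right _ _)]
  have hκ1 : κ < 1 := by
    have h1 : max (1 - m ^ 2 / M ^ 2) 0 < 1 := by
      apply max_lt _ one_pos
      have := div_pos (pow_pos hm 2) (pow_pos hM 2)
      linarith
    rw [hκdef]
    calc Real.sqrt (max (1 - m ^ 2 / M ^ 2) 0) < Real.sqrt 1 :=
      Real.sqrt_lt_sqrt (le_max_right _ _) h1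
    _ = 1 := Real.sqrt_one
  have hzz : ∀ w₁ w₂ : X, ‖(w₁ - ρ • (B w₁ - f)) - (w₂ - ρ • (B w₂ - f))‖ ^ 2
      ≤ κ ^ 2 * ‖w₁ - w₂‖ ^ 2 := by
    intro w₁ w₂
    have hz : (w₁ - ρ • (B w₁ - f)) - (w₂ - ρ • (B w₂ - f))
        = (w₁ - w₂) - ρ • (B w₁ - B w₂) := by
      rw [smul_sub, smul_sub, smul_sub]; abel
    rw [hz, norm_sub_sq_real, real_inner_smul_right, norm_smul, Real.norm_eq_abs,
      abs_of_pos hρ]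
    have hmono : ρ * m * ‖w₁ - w₂‖ ^ 2 ≤ ρ * ⟪w₁ - w₂, B w₁ - B w₂⟫_ℝ := by
      rw [real_inner_comm]
      have := hBmono w₁ w₂
      nlinarith [hρ]
    have hlip : ‖B w₁ - B w₂‖ ^ 2 ≤ M ^ 2 * ‖w₁ - w₂‖ ^ 2 := by
      have := hBlip w₁ w₂
      nlinarith [norm_nonneg (B w₁ - B w₂), norm_nonneg (w₁ - w₂), hM.le,
        mul_nonneg hM.le (norm_nonneg (w₁ - w₂))]
    have hfact : 1 - 2 * ρ * m + ρ ^ 2 * M ^ 2 ≤ κ ^ 2 := by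
      rw [hκsq]
      have : 1 - 2 * ρ * m + ρ ^ 2 * M ^ 2 = 1 - m ^ 2 / M ^ 2 := by
        rw [hρdef]; field_simp; ring
      rw [this]
      exact le_max_left _ _
    nlinarith [sq_nonneg ρ, sq_nonneg (‖w₁ - w₂‖), hlip, hmono, hρ,
      mul_le_mul_of_nonneg_left hlip (sq_nonneg ρ),
      mul_le_mul_of_nonneg_right hfact (sq_nonneg ‖w₁ - w₂‖)]
  have hTlip : ∀ w₁ w₂ : X, ‖T w₁ - T w₂‖ ≤ κ * ‖w₁ - w₂‖ := by
    intro w₁ w₂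
    apply my_norm_le_of_sq (by positivity) _ (norm_nonneg _)
    have h1 := hne w₁ w₂
    have h2 := hzz w₁ w₂
    have h3 : ‖T w₁ - T w₂‖ ^ 2 ≤
        ‖(w₁ - ρ • (B w₁ - f)) - (w₂ - ρ • (B w₂ - f))‖ ^ 2 := by
      apply pow_le_pow_left₀ (norm_nonneg _) h1
    calc ‖T w₁ - T w₂‖ ^ 2 ≤ κ ^ 2 * ‖w₁ - w₂‖ ^ 2 := le_trans h3 h2
    _ = (κ * ‖w₁ - w₂‖) ^ 2 := by ring
  -- Banach fixed point
  haveI : Nonempty X := ⟨0⟩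
  have hcontr : ContractingWith κ.toNNReal T := by
    constructor
    · have : (κ.toNNReal : ℝ) < 1 := by rwa [Real.coe_toNNReal _ hκ0]
      exact_mod_cast this
    · apply LipschitzWith.of_dist_le_mul
      intro x y
      rw [dist_eq_norm, dist_eq_norm, Real.coe_toNNReal _ hκ0]
      exact hTlip x y
  obtain ⟨u, hfix⟩ : ∃ u : X, T u = u := ⟨ContractingWith.fixedPoint T hcontr,
    hcontr.fixedPoint_isFixedPt⟩
  have huC : u ∈ C := hfix ▸ hTC u
  have hVI : ∀ v ∈ C, ⟪f - B u, v - u⟫_ℝ ≤ φ v - φ u := by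
    intro v hv
    have h := hTvi u v hv
    rw [hfix] at h
    have e : u - ρ • (B u - f) - u = ρ • (f - B u) := by
      rw [smul_sub, smul_sub]; abel
    rw [e, real_inner_smul_left, hψ] at h
    simp only at h
    have h2 : ρ * ⟪f - B u, v - u⟫_ℝ ≤ ρ * (φ v - φ u) := by linarith
    exact le_of_mul_le_mul_left h2 hρ
  refine ⟨u, ⟨huC, hVI⟩, ?_⟩
  rintro y ⟨hyC, hyVI⟩
  have h1 := hyVI u huC
  have h2 := hVI y hyC
  have el : ∀ a : X, ⟪a, u - y⟫_ℝ = -⟪a, y - u⟫_ℝ := fun a => by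
    rw [show u - y = -(y - u) by abel, inner_neg_right]
  have e : ⟪f - B y, u - y⟫_ℝ + ⟪f - B u, y - u⟫_ℝ = ⟪B y - B u, y - u⟫_ℝ := by
    simp only [inner_sub_left, el]
    ring
  have hmono := hBmono y u
  have hsq : m * ‖y - u‖ ^ 2 ≤ 0 := by
    have hsum := add_le_add h1 h2
    rw [e] at hsum
    linarith [hmono, hsum]
  have : ‖y - u‖ ^ 2 ≤ 0 := by nlinarith
  have : ‖y - u‖ = 0 := by nlinarith [norm_nonneg (y - u)]
  have := norm_eq_zero.mp this
  exact sub_eq_zero.mp this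

theorem my_qvi {X : Type*} [NormedAddCommGroup X] [InnerProductSpace ℝ X] [CompleteSpace X]
    (C : Set X) (hCne : C.Nonempty) (hCcl : IsClosed C) (hCcx : Convex ℝ C)
    (B : X → X) (m M : ℝ) (hm : 0 < m) (hM : 0 < M)
    (hBmono : ∀ u v : X, m * ‖u - v‖ ^ 2 ≤ ⟪B u - B v, u - v⟫_ℝ)
    (hBlip : ∀ u v : X, ‖B u - B v‖ ≤ M * ‖u - v‖)
    (j : X → X → ℝ)
    (hjc : ∀ η : X, ConvexOn ℝ Set.univ (j η))
    (hjl : ∀ η : X, LowerSemicontinuous (j η))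
    (α : ℝ) (hα : 0 ≤ α)
    (hj_lip : ∀ η η' v v' : X,
      j η v' - j η v + j η' v - j η' v' ≤ α * ‖η - η'‖ * ‖v - v'‖)
    (hmα : α < m) (f : X) :
    ∃! u : X, u ∈ C ∧ ∀ v ∈ C, ⟪f - B u, v - u⟫_ℝ ≤ j u v - j u u := by
  have hSex : ∀ η : X, ∃ u : X, u ∈ C ∧ ∀ v ∈ C, ⟪f - B u, v - u⟫_ℝ ≤ j η v - j η u :=
    fun η => (my_vi2 C hCne hCcl hCcx B m M hm hM hBmono hBlip (j η) (hjc η) (hjl η) f).exists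
  choose S hSC hSvi using hSex
  -- key inequality identity
  have esum : ∀ u₁ u₂ : X,
      ⟪f - B u₁, u₂ - u₁⟫_ℝ + ⟪f - B u₂, u₁ - u₂⟫_ℝ = ⟪B u₂ - B u₁, u₂ - u₁⟫_ℝ := by
    intro u₁ u₂
    have el : ∀ a : X, ⟪a, u₁ - u₂⟫_ℝ = -⟪a, u₂ - u₁⟫_ℝ := fun a => by
      rw [show u₁ - u₂ = -(u₂ - u₁) by abel, inner_neg_right]
    simp only [inner_sub_left, el]
    ring
  have hSlip : ∀ η₁ η₂ : X, ‖S η₁ - S η₂‖ ≤ (α / m) * ‖η₁ - η₂‖ := by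
    intro η₁ η₂
    have h1 := hSvi η₁ (S η₂) (hSC η₂)
    have h2 := hSvi η₂ (S η₁) (hSC η₁)
    have hsum := add_le_add h1 h2
    rw [esum] at hsum
    have hmono := hBmono (S η₂) (S η₁)
    have hjl2 := hj_lip η₁ η₂ (S η₁) (S η₂)
    have hnr : ‖S η₂ - S η₁‖ = ‖S η₁ - S η₂‖ := norm_sub_rev _ _
    have key : m * ‖S η₁ - S η₂‖ ^ 2 ≤ α * ‖η₁ - η₂‖ * ‖S η₁ - S η₂‖ := by
      rw [hnr] at hmono
      linarith [hsum, hmono, hjl2]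
    rcases eq_or_lt_of_le (norm_nonneg (S η₁ - S η₂)) with h0 | h0
    · rw [← h0]
      positivity
    · rw [div_mul_eq_mul_div, le_div_iff₀ hm]
      nlinarith [key, h0]
  haveI : Nonempty X := ⟨0⟩
  have hcontr : ContractingWith (α / m).toNNReal S := by
    constructor
    · have h1 : ((α / m).toNNReal : ℝ) < 1 := by
        rw [Real.coe_toNNReal _ (by positivity)]
        rw [div_lt_one hm]
        exact hmα
      exact_mod_cast h1
    · apply LipschitzWith.of_dist_le_mul
      intro x y
      rw [dist_eq_norm, dist_eq_norm, Real.coe_toNNReal _ (by positivity)]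
      exact hSlip x y
  obtain ⟨u, hfix⟩ : ∃ u : X, S u = u := ⟨ContractingWith.fixedPoint S hcontr,
    hcontr.fixedPoint_isFixedPt⟩
  have huC : u ∈ C := hfix ▸ hSC u
  have hVI : ∀ v ∈ C, ⟪f - B u, v - u⟫_ℝ ≤ j u v - j u u := by
    intro v hv
    have h := hSvi u v hv
    rwa [hfix] at h
  refine ⟨u, ⟨huC, hVI⟩, ?_⟩
  rintro y ⟨hyC, hyVI⟩
  have h1 := hyVI u huC
  have h2 := hVI y hyC
  have hsum := add_le_add h1 h2
  rw [esum] at hsum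
  have hmono := hBmono u y
  have hjl2 := hj_lip y u y u
  have hnr : ‖u - y‖ = ‖y - u‖ := norm_sub_rev _ _
  rw [hnr] at hmono
  have key : m * ‖y - u‖ ^ 2 ≤ α * ‖y - u‖ * ‖y - u‖ := by
    linarith [hsum, hmono, hjl2]
  have h3 : ‖y - u‖ ^ 2 ≤ 0 := by nlinarith [key, hmα, norm_nonneg (y - u)]
  have h4 : ‖y - u‖ = 0 := by nlinarith [norm_nonneg (y - u)]
  exact sub_eq_zero.mp (norm_eq_zero.mp h4)

theorem penalty_problems_exist_unique
    {X : Type*} [NormedAddCommGroup X] [InnerProductSpace ℝ X] [CompleteSpace X]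
    (K : Set X) (hK_ne : K.Nonempty) (hK_closed : IsClosed K) (hK_convex : Convex ℝ K)
    (A : X → X) (m M : ℝ) (hm : 0 < m) (hM : 0 < M)
    (hA_mono : ∀ u v : X, m * ‖u - v‖ ^ 2 ≤ ⟪A u - A v, u - v⟫_ℝ)
    (hA_lip : ∀ u v : X, ‖A u - A v‖ ≤ M * ‖u - v‖)
    (j : X → X → ℝ)
    (hj_convex : ∀ η : X, ConvexOn ℝ Set.univ (j η))
    (hj_lsc : ∀ η : X, LowerSemicontinuous (j η))
    (α : ℝ) (hα : 0 ≤ α)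
    (hj_lip : ∀ η η' v v' : X,
      j η v' - j η v + j η' v - j η' v' ≤ α * ‖η - η'‖ * ‖v - v'‖)
    (hmα : α < m) (f : X)
    (Kstar : Set X) (hKs_ne : Kstar.Nonempty) (hKs_closed : IsClosed Kstar)
    (hKs_convex : Convex ℝ Kstar) (hKs_sub : Kstar ⊆ K)
    (G : X → X)
    (hG_mono : ∀ u v : X, 0 ≤ ⟪G u - G v, u - v⟫_ℝ)
    (hG_lip : ∃ L : ℝ, 0 < L ∧ ∀ u v : X, ‖G u - G v‖ ≤ L * ‖u - v‖)
    (lam : ℝ) (hlam : 0 < lam) :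
    (∃! ustar : X, ustar ∈ Kstar ∧ ∀ v ∈ Kstar,
      ⟪A ustar, v - ustar⟫_ℝ + j ustar v - j ustar ustar ≥ ⟪f, v - ustar⟫_ℝ) ∧
    (∃! ulam : X, ulam ∈ K ∧ ∀ v ∈ K,
      ⟪A ulam, v - ulam⟫_ℝ + (1 / lam) * ⟪G ulam, v - ulam⟫_ℝ
        + j ulam v - j ulam ulam ≥ ⟪f, v - ulam⟫_ℝ) := by
  constructor
  · obtain ⟨u, ⟨h1, h2⟩, h3⟩ := my_qvi Kstar hKs_ne hKs_closed hKs_convex A m M hm hM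
      hA_mono hA_lip j hj_convex hj_lsc α hα hj_lip hmα f
    have hiff : ∀ u v : X, (⟪f - A u, v - u⟫_ℝ ≤ j u v - j u u) ↔
        (⟪A u, v - u⟫_ℝ + j u v - j u u ≥ ⟪f, v - u⟫_ℝ) := by
      intro u v
      rw [inner_sub_left]
      constructor <;> intro h <;> linarith
    refine ⟨u, ⟨h1, fun v hv => (hiff u v).mp (h2 v hv)⟩, fun y hy =>
      h3 y ⟨hy.1, fun v hv => (hiff y v).mpr (hy.2 v hv)⟩⟩
  · obtain ⟨L, hL, hGlip⟩ := hG_lip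
    obtain ⟨B, hBdef⟩ : ∃ B : X → X, B = fun u => A u + (1 / lam) • G u := ⟨_, rfl⟩
    have hBsub : ∀ u v : X, B u - B v = (A u - A v) + (1 / lam) • (G u - G v) := by
      intro u v
      rw [hBdef]
      simp only [smul_sub]
      abel
    have hBmono : ∀ u v : X, m * ‖u - v‖ ^ 2 ≤ ⟪B u - B v, u - v⟫_ℝ := by
      intro u v
      rw [hBsub, inner_add_left, real_inner_smul_left]
      have h1 := hA_mono u v
      have h2 := hG_mono u v
      have h3 : 0 ≤ (1 / lam) * ⟪G u - G v, u - v⟫_ℝ := by positivity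
      linarith
    have hBlip : ∀ u v : X, ‖B u - B v‖ ≤ (M + L / lam) * ‖u - v‖ := by
      intro u v
      rw [hBsub]
      calc ‖(A u - A v) + (1 / lam) • (G u - G v)‖
          ≤ ‖A u - A v‖ + ‖(1 / lam) • (G u - G v)‖ := norm_add_le _ _
      _ = ‖A u - A v‖ + (1 / lam) * ‖G u - G v‖ := by
          rw [norm_smul, Real.norm_eq_abs, abs_of_pos (by positivity)]
      _ ≤ M * ‖u - v‖ + (1 / lam) * (L * ‖u - v‖) := by
          have := hGlip u v
          have h4 := hA_lip u v
          have h5 : (0:ℝ) < 1 / lam := by positivity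
          nlinarith
      _ = (M + L / lam) * ‖u - v‖ := by ring
    obtain ⟨u, ⟨h1, h2⟩, h3⟩ := my_qvi K hK_ne hK_closed hK_convex B m (M + L / lam) hm
      (by positivity) hBmono hBlip j hj_convex hj_lsc α hα hj_lip hmα f
    have hiff : ∀ u v : X, (⟪f - B u, v - u⟫_ℝ ≤ j u v - j u u) ↔
        (⟪A u, v - u⟫_ℝ + (1 / lam) * ⟪G u, v - u⟫_ℝ + j u v - j u u ≥ ⟪f, v - u⟫_ℝ) := by
      intro u v
      rw [inner_sub_left, hBdef]
      simp only [inner_add_left, real_inner_smul_left]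
      constructor <;> intro h <;> linarith
    refine ⟨u, ⟨h1, fun v hv => (hiff u v).mp (h2 v hv)⟩, fun y hy =>
      h3 y ⟨hy.1, fun v hv => (hiff y v).mpr (hy.2 v hv)⟩⟩
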